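/- arXiv:2508.01133 — 4 statements merged into one kernel-verified Lean document; each statement's English description precedes it below -/
import Mathlib

section
/- Let Q : ℝ → ℂ^{2×2} be continuous with ‖Q‖_∞ := sup_{x ∈ ℝ} ‖Q(x)‖ < ∞, and let γ > 0. Suppose that for every w ∈ L²(ℝ, ℂ²) one has ‖Q w‖_{L²} ≥ γ ‖w‖_{L²}, where (Q w)(x) = Q(x) w(x). Then |det Q(x)| > γ²/8 for every x ∈ ℝ. -/
open MeasureTheory

/-- The continuous linear map on ℂ² (with the Euclidean norm) induced by a 2×2 complex
matrix; `‖matCLM A‖` is the operator norm of `A` on ℂ². -/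
noncomputable def matCLM (A : Matrix (Fin 2) (Fin 2) ℂ) :
    EuclideanSpace ℂ (Fin 2) →L[ℂ] EuclideanSpace ℂ (Fin 2) :=
  Matrix.toEuclideanCLM (𝕜 := ℂ) A

open ENNReal

/-- If `γ ≤ ‖λ‖` for an eigenvalue `λ` of `A` (expressed via a vanishing determinant). -/
lemma matCLM_eig_norm (A : Matrix (Fin 2) (Fin 2) ℂ) (lam : ℂ)
    (hdet : (A - lam • 1).det = 0) {γ : ℝ}
    (h : ∀ v : EuclideanSpace ℂ (Fin 2), γ * ‖v‖ ≤ ‖matCLM A v‖) :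
    γ ≤ ‖lam‖ := by
  obtain ⟨v, hv0, hv⟩ := (Matrix.exists_mulVec_eq_zero_iff).2 hdet
  have hAv : A.mulVec v = lam • v := by
    have := hv
    rw [Matrix.sub_mulVec, sub_eq_zero] at this
    rw [this, Matrix.smul_mulVec, Matrix.one_mulVec]
  set u : EuclideanSpace ℂ (Fin 2) := (WithLp.equiv 2 (Fin 2 → ℂ)).symm v with hu
  have hu0 : u ≠ 0 := by simpa [hu] using hv0
  have happ : matCLM A u = lam • u := by
    rw [hu, matCLM]
    change WithLp.toLp 2 (A.mulVec v) = _
    rw [hAv]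
    rfl
  have := h u
  rw [happ, norm_smul] at this
  have hn : 0 < ‖u‖ := norm_pos_iff.2 hu0
  have := le_of_mul_le_mul_right this hn
  simpa using this

lemma matCLM_det_quad (A : Matrix (Fin 2) (Fin 2) ℂ) (lam : ℂ) :
    (A - lam • 1).det = lam ^ 2 - A.trace * lam + A.det := by
  rw [Matrix.det_fin_two, Matrix.det_fin_two, Matrix.trace_fin_two]
  simp [Matrix.sub_apply, Matrix.smul_apply, Matrix.one_apply]
  ring

/-- A pointwise lower bound on a 2×2 matrix gives a lower bound on its determinant. -/
lemma matCLM_det_ge (A : Matrix (Fin 2) (Fin 2) ℂ) {γ : ℝ} (hγ : 0 ≤ γ)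
    (h : ∀ v : EuclideanSpace ℂ (Fin 2), γ * ‖v‖ ≤ ‖matCLM A v‖) :
    γ ^ 2 ≤ ‖A.det‖ := by
  obtain ⟨s, hs⟩ := IsAlgClosed.exists_pow_nat_eq (A.trace ^ 2 - 4 * A.det) (two_pos)
  set t := A.trace
  set d := A.det
  have h1 : (A - ((t + s) / 2) • 1).det = 0 := by
    rw [matCLM_det_quad]; linear_combination hs / 4
  have h2 : (A - ((t - s) / 2) • 1).det = 0 := by
    rw [matCLM_det_quad]; linear_combination hs / 4
  have hprod : ((t + s) / 2) * ((t - s) / 2) = d := by linear_combination (-1/4 : ℂ) * hs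
  have g1 := matCLM_eig_norm A _ h1 h
  have g2 := matCLM_eig_norm A _ h2 h
  calc γ ^ 2 = γ * γ := sq γ
    _ ≤ ‖(t + s) / 2‖ * ‖(t - s) / 2‖ :=
        mul_le_mul g1 g2 hγ (norm_nonneg _)
    _ = ‖d‖ := by rw [← norm_mul, hprod]

/-- The L² lower bound for the multiplication operator implies the pointwise lower bound. -/
lemma matCLM_pointwise_bound
    (Q : ℝ → Matrix (Fin 2) (Fin 2) ℂ) (hQc : Continuous Q)
    (γ : ℝ) (hγ : 0 < γ)
    (hlow : ∀ w : ℝ → EuclideanSpace ℂ (Fin 2), MemLp w 2 (volume : Measure ℝ) →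
      ENNReal.ofReal γ * eLpNorm w 2 (volume : Measure ℝ) ≤
        eLpNorm (fun x => matCLM (Q x) (w x)) 2 (volume : Measure ℝ)) :
    ∀ x (v : EuclideanSpace ℂ (Fin 2)), γ * ‖v‖ ≤ ‖matCLM (Q x) v‖ := by
  intro x₀ v
  by_contra hcon
  push_neg at hcon
  set c : ℝ := (‖matCLM (Q x₀) v‖ + γ * ‖v‖) / 2 with hc
  have hc1 : ‖matCLM (Q x₀) v‖ < c := by rw [hc]; linarith
  have hc2 : c < γ * ‖v‖ := by rw [hc]; linarith
  have hc0 : 0 ≤ c := le_of_lt (lt_of_le_of_lt (norm_nonneg _) hc1)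
  have key : ∀ x, matCLM (Q x) v =
      (WithLp.equiv 2 (Fin 2 → ℂ)).symm ((Q x).mulVec (WithLp.equiv 2 (Fin 2 → ℂ) v)) := by
    intro x
    conv_lhs => rw [← (WithLp.equiv 2 (Fin 2 → ℂ)).symm_apply_apply v]
    rfl
  have hcont : Continuous fun x => matCLM (Q x) v := by
    have h1 : Continuous fun x => (Q x).mulVec (WithLp.equiv 2 (Fin 2 → ℂ) v) :=
      hQc.matrix_mulVec continuous_const
    have h2 : Continuous ((WithLp.equiv 2 (Fin 2 → ℂ)).symm) :=
      (PiLp.continuousLinearEquiv 2 ℂ (fun _ : Fin 2 => ℂ)).symm.continuous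
    exact (h2.comp h1).congr (fun x => (key x).symm)
  have hF : Continuous fun x => ‖matCLM (Q x) v‖ := hcont.norm
  have hU : IsOpen {x : ℝ | ‖matCLM (Q x) v‖ < c} := isOpen_lt hF continuous_const
  obtain ⟨δ, hδ, hball⟩ := Metric.isOpen_iff.1 hU x₀ hc1
  set I : Set ℝ := Set.Icc (x₀ - δ/4) (x₀ + δ/4) with hI
  have hIU : ∀ x ∈ I, ‖matCLM (Q x) v‖ < c := by
    intro x hx
    apply hball
    rw [Metric.mem_ball, Real.dist_eq]
    obtain ⟨hl, hr⟩ := hx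
    rw [abs_lt]; constructor <;> linarith
  have hvolI : volume I = ENNReal.ofReal (δ/2) := by
    rw [hI, Real.volume_Icc]; ring_nf
  have hvol0 : volume I ≠ 0 := by
    rw [hvolI]; simp [ENNReal.ofReal_eq_zero]; linarith
  have hvoltop : volume I ≠ ⊤ := by rw [hvolI]; exact ENNReal.ofReal_ne_top
  set w : ℝ → EuclideanSpace ℂ (Fin 2) := I.indicator fun _ => v with hw
  have hwmem : MemLp w 2 (volume : Measure ℝ) :=
    memLp_indicator_const 2 measurableSet_Icc v (Or.inr hvoltop)
  have h1 := hlow w hwmem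
  set m : ℝ≥0∞ := (volume I) ^ (1 / (2 : ℝ≥0∞).toReal) with hm
  have hwnorm : eLpNorm w 2 (volume : Measure ℝ) = ‖v‖₊ * m := by
    rw [hw, eLpNorm_indicator_const measurableSet_Icc two_ne_zero ENNReal.ofNat_ne_top]
    rfl
  have hup : eLpNorm (fun x => matCLM (Q x) (w x)) 2 (volume : Measure ℝ) ≤ ‖c‖₊ * m := by
    change _ ≤ ‖c‖ₑ * volume (Set.Icc (x₀ - δ/4) (x₀ + δ/4)) ^ (1 / (2 : ℝ≥0∞).toReal)
    rw [← eLpNorm_indicator_const (c := c) measurableSet_Icc two_ne_zero ENNReal.ofNat_ne_top]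
    apply eLpNorm_mono
    intro x
    by_cases hx : x ∈ I
    · rw [hw, Set.indicator_of_mem hx, Set.indicator_of_mem hx]
      rw [Real.norm_eq_abs, abs_of_nonneg hc0]
      exact le_of_lt (hIU x hx)
    · rw [hw, Set.indicator_of_notMem hx, Set.indicator_of_notMem hx]
      simp
  have hm0 : m ≠ 0 := by
    rw [hm]
    simp [ENNReal.rpow_eq_zero_iff, hvol0, hvoltop]
  have hmtop : m ≠ ⊤ := by
    rw [hm]
    exact ENNReal.rpow_ne_top_of_nonneg (by norm_num) hvoltop
  have h2 : ENNReal.ofReal γ * (↑‖v‖₊ : ℝ≥0∞) * m ≤ (↑‖c‖₊ : ℝ≥0∞) * m := by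
    rw [mul_assoc, ← hwnorm]
    exact le_trans h1 hup
  have h3 : ENNReal.ofReal γ * (↑‖v‖₊ : ℝ≥0∞) ≤ (↑‖c‖₊ : ℝ≥0∞) :=
    (ENNReal.mul_le_mul_iff_left hm0 hmtop).1 h2
  rw [show (↑‖v‖₊ : ℝ≥0∞) = ENNReal.ofReal ‖v‖ from (ofReal_norm v).symm,
    show (↑‖c‖₊ : ℝ≥0∞) = ENNReal.ofReal ‖c‖ from (ofReal_norm c).symm,
    ← ENNReal.ofReal_mul (le_of_lt hγ)] at h3
  have h4 : γ * ‖v‖ ≤ ‖c‖ := (ENNReal.ofReal_le_ofReal_iff (norm_nonneg _)).1 h3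
  rw [Real.norm_eq_abs, abs_of_nonneg hc0] at h4
  linarith

/-- if the multiplication operator by the continuous bounded matrix-valued
function `Q` is bounded below by `γ > 0` on L²(ℝ, ℂ²), then `|det Q(x)| > γ²/8`
for every `x`. -/
theorem det_lower_bound_of_multiplication_bounded_below
    (Q : ℝ → Matrix (Fin 2) (Fin 2) ℂ) (hQc : Continuous Q)
    (hb : BddAbove (Set.range fun x => ‖matCLM (Q x)‖))
    (γ : ℝ) (hγ : 0 < γ)
    (hlow : ∀ w : ℝ → EuclideanSpace ℂ (Fin 2), MemLp w 2 (volume : Measure ℝ) →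
      ENNReal.ofReal γ * eLpNorm w 2 (volume : Measure ℝ) ≤
        eLpNorm (fun x => matCLM (Q x) (w x)) 2 (volume : Measure ℝ)) :
    ∀ x, γ ^ 2 / 8 < ‖(Q x).det‖ := by
  intro x
  have hpt := matCLM_pointwise_bound Q hQc γ hγ hlow x
  have hdet := matCLM_det_ge (Q x) (le_of_lt hγ) hpt
  have : γ ^ 2 / 8 < γ ^ 2 := by
    have : 0 < γ ^ 2 := pow_pos hγ 2
    linarith
  linarith
end

section
/- Let Q : ℝ → ℂ^{2×2} be continuous with ‖Q‖_∞ := sup_{x ∈ ℝ} ‖Q(x)‖ < ∞, and let M_Q be the bounded multiplication operator on L²(ℝ, ℂ²) given by (M_Q w)(x) = Q(x) w(x). Then for λ ∈ ℂ, λ belongs to the spectrum of M_Q (as an element of the Banach algebra of bounded linear operators on L²(ℝ, ℂ²)) if and only if for every ε > 0 there exists x ∈ ℝ such that |det(λ I − Q(x))| < ε; equivalently, if and only if inf_{x ∈ ℝ} |det(λ I − Q(x))| = 0. -/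
open MeasureTheory

section Aux
open Matrix

abbrev E2 := EuclideanSpace ℂ (Fin 2)
noncomputable abbrev H2 := Lp E2 2 (volume : Measure ℝ)

lemma matCLM_apply (A : Matrix (Fin 2) (Fin 2) ℂ) (v : E2) (i : Fin 2) :
    matCLM A v i = A i 0 * v 0 + A i 1 * v 1 := by
  have : matCLM A v = (WithLp.equiv 2 (Fin 2 → ℂ)).symm (A *ᵥ (WithLp.equiv 2 (Fin 2 → ℂ)) v) := rfl
  rw [this]
  have h2 : (WithLp.equiv 2 (Fin 2 → ℂ)).symm (A *ᵥ (WithLp.equiv 2 (Fin 2 → ℂ)) v) i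
      = (A *ᵥ (WithLp.equiv 2 (Fin 2 → ℂ)) v) i := rfl
  rw [h2, Matrix.mulVec, dotProduct, Fin.sum_univ_two]
  rfl

lemma matCLM_single (A : Matrix (Fin 2) (Fin 2) ℂ) (j i : Fin 2) :
    matCLM A (EuclideanSpace.single j 1) i = A i j := by
  rw [matCLM_apply]
  fin_cases j <;> simp

lemma norm2_eq (v : E2) : ‖v‖ = Real.sqrt (‖v 0‖^2 + ‖v 1‖^2) := by
  rw [EuclideanSpace.norm_eq, Fin.sum_univ_two]

lemma abs_le_norm2 (v : E2) (i : Fin 2) : ‖v i‖ ≤ ‖v‖ := by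
  rw [norm2_eq]
  have h : ‖v i‖^2 ≤ ‖v 0‖^2 + ‖v 1‖^2 := by
    fin_cases i <;> simp <;> nlinarith [sq_nonneg ‖v 0‖, sq_nonneg ‖v 1‖, norm_nonneg (v 0), norm_nonneg (v 1)]
  calc ‖v i‖ = Real.sqrt (‖v i‖^2) := (Real.sqrt_sq (norm_nonneg _)).symm
    _ ≤ _ := Real.sqrt_le_sqrt h

lemma entry_le_opNorm (A : Matrix (Fin 2) (Fin 2) ℂ) (i j : Fin 2) :
    ‖A i j‖ ≤ ‖matCLM A‖ := by
  have h1 : ‖A i j‖ ≤ ‖matCLM A (EuclideanSpace.single j 1)‖ := by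
    rw [← matCLM_single A j i]; exact abs_le_norm2 _ i
  refine h1.trans ?_
  calc ‖matCLM A (EuclideanSpace.single j 1)‖ ≤ ‖matCLM A‖ * ‖(EuclideanSpace.single j (1:ℂ))‖ :=
        (matCLM A).le_opNorm _
    _ = ‖matCLM A‖ := by rw [EuclideanSpace.norm_single, norm_one, mul_one]

lemma opNorm_le_sum_entries (A : Matrix (Fin 2) (Fin 2) ℂ) :
    ‖matCLM A‖ ≤ ‖A 0 0‖ + ‖A 0 1‖ + ‖A 1 0‖ + ‖A 1 1‖ := by
  refine ContinuousLinearMap.opNorm_le_bound _ (by positivity) (fun v => ?_)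
  have hrow : ∀ i : Fin 2, ‖matCLM A v i‖ ≤ (‖A i 0‖ + ‖A i 1‖) * ‖v‖ := by
    intro i
    rw [matCLM_apply]
    calc ‖A i 0 * v 0 + A i 1 * v 1‖ ≤ ‖A i 0 * v 0‖ + ‖A i 1 * v 1‖ := norm_add_le _ _
      _ = ‖A i 0‖ * ‖v 0‖ + ‖A i 1‖ * ‖v 1‖ := by rw [norm_mul, norm_mul]
      _ ≤ ‖A i 0‖ * ‖v‖ + ‖A i 1‖ * ‖v‖ := by
          gcongr <;> [exact abs_le_norm2 v 0; exact abs_le_norm2 v 1]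
      _ = (‖A i 0‖ + ‖A i 1‖) * ‖v‖ := by ring
  rw [norm2_eq]
  have h0 := hrow 0
  have h1 := hrow 1
  have hnn : (0:ℝ) ≤ ‖v‖ := norm_nonneg _
  have key : ‖matCLM A v 0‖^2 + ‖matCLM A v 1‖^2
      ≤ ((‖A 0 0‖ + ‖A 0 1‖ + ‖A 1 0‖ + ‖A 1 1‖) * ‖v‖)^2 := by
    nlinarith [norm_nonneg (matCLM A v 0), norm_nonneg (matCLM A v 1),
      norm_nonneg (A 0 0), norm_nonneg (A 0 1), norm_nonneg (A 1 0), norm_nonneg (A 1 1),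
      mul_nonneg (mul_nonneg (norm_nonneg (A 0 0)) (norm_nonneg (A 1 1))) (mul_nonneg hnn hnn)]
  calc Real.sqrt (‖matCLM A v 0‖^2 + ‖matCLM A v 1‖^2)
      ≤ Real.sqrt (((‖A 0 0‖ + ‖A 0 1‖ + ‖A 1 0‖ + ‖A 1 1‖) * ‖v‖)^2) := Real.sqrt_le_sqrt key
    _ = (‖A 0 0‖ + ‖A 0 1‖ + ‖A 1 0‖ + ‖A 1 1‖) * ‖v‖ := Real.sqrt_sq (by positivity)

lemma matCLM_mul (A B : Matrix (Fin 2) (Fin 2) ℂ) (v : E2) :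
    matCLM A (matCLM B v) = matCLM (A * B) v := by
  simp [matCLM, _root_.map_mul]

lemma exists_unit_small (A : Matrix (Fin 2) (Fin 2) ℂ) {δ : ℝ} (hδ : 0 < δ)
    (hdet : ‖A.det‖ < δ) :
    ∃ v : E2, ‖v‖ = 1 ∧ ‖matCLM A v‖ ≤ 4 * Real.sqrt δ := by
  have hsq : 0 < Real.sqrt δ := Real.sqrt_pos.mpr hδ
  by_cases hcase : ∀ i j : Fin 2, ‖A i j‖ < Real.sqrt δ
  · refine ⟨EuclideanSpace.single 0 1, by simp, ?_⟩
    calc ‖matCLM A (EuclideanSpace.single 0 1)‖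
        ≤ ‖matCLM A‖ * ‖EuclideanSpace.single (0:Fin 2) (1:ℂ)‖ := (matCLM A).le_opNorm _
      _ = ‖matCLM A‖ := by rw [EuclideanSpace.norm_single, norm_one, mul_one]
      _ ≤ ‖A 0 0‖ + ‖A 0 1‖ + ‖A 1 0‖ + ‖A 1 1‖ := opNorm_le_sum_entries A
      _ ≤ 4 * Real.sqrt δ := by
          have := hcase 0 0; have := hcase 0 1; have := hcase 1 0; have := hcase 1 1
          linarith
  · push_neg at hcase
    obtain ⟨i, j, hij⟩ := hcase
    have hadj : ∃ i' j' : Fin 2, ‖A.adjugate i' j'‖ = ‖A i j‖ := by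
      fin_cases i <;> fin_cases j
      · exact ⟨1, 1, by rw [Matrix.adjugate_fin_two]; simp⟩
      · exact ⟨0, 1, by rw [Matrix.adjugate_fin_two]; simp⟩
      · exact ⟨1, 0, by rw [Matrix.adjugate_fin_two]; simp⟩
      · exact ⟨0, 0, by rw [Matrix.adjugate_fin_two]; simp⟩
    obtain ⟨i', j', hij'⟩ := hadj
    set u : E2 := matCLM A.adjugate (EuclideanSpace.single j' 1) with hu
    have hui : u i' = A.adjugate i' j' := by
      rw [hu, matCLM_apply]
      fin_cases j' <;> simp [EuclideanSpace.single]
    have hunorm : Real.sqrt δ ≤ ‖u‖ := by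
      calc Real.sqrt δ ≤ ‖A i j‖ := hij
        _ = ‖u i'‖ := by rw [hui, hij']
        _ ≤ ‖u‖ := abs_le_norm2 u i'
    have hupos : 0 < ‖u‖ := lt_of_lt_of_le hsq hunorm
    have hAu : matCLM A u = A.det • EuclideanSpace.single j' 1 := by
      rw [hu, matCLM_mul, Matrix.mul_adjugate]
      simp [matCLM, _root_.map_smul]
    have hAunorm : ‖matCLM A u‖ = ‖A.det‖ := by
      rw [hAu, norm_smul, EuclideanSpace.norm_single, norm_one, mul_one]
    refine ⟨‖u‖⁻¹ • u, ?_, ?_⟩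
    · rw [norm_smul, norm_inv, norm_norm, inv_mul_cancel₀ (ne_of_gt hupos)]
    · rw [(matCLM A).map_smul_of_tower, norm_smul, norm_inv, norm_norm, hAunorm]
      have h1 : ‖u‖⁻¹ ≤ (Real.sqrt δ)⁻¹ := inv_anti₀ hsq hunorm
      calc ‖u‖⁻¹ * ‖A.det‖ ≤ (Real.sqrt δ)⁻¹ * δ := by
            apply mul_le_mul h1 hdet.le (norm_nonneg _) (by positivity)
        _ = Real.sqrt δ := by
            rw [inv_mul_eq_div, div_eq_iff hsq.ne', Real.mul_self_sqrt hδ.le]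
        _ ≤ 4 * Real.sqrt δ := by linarith

noncomputable def matCLMl : Matrix (Fin 2) (Fin 2) ℂ →ₗ[ℂ] (E2 →L[ℂ] E2) where
  toFun := matCLM
  map_add' A B := by simp [matCLM, map_add]
  map_smul' c A := by simp [matCLM, _root_.map_smul]

lemma matCLM_continuous : Continuous matCLM :=
  matCLMl.continuous_of_finiteDimensional

lemma matCLM_sub_smul_one (z : ℂ) (B : Matrix (Fin 2) (Fin 2) ℂ) (v : E2) :
    matCLM (z • (1 : Matrix (Fin 2) (Fin 2) ℂ) - B) v = z • v - matCLM B v := by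
  simp [matCLM, map_sub, _root_.map_smul, _root_.map_one]

/-- a.e. description of `(z•1 - T) w`. -/
lemma apply_sub_ae (Q : ℝ → Matrix (Fin 2) (Fin 2) ℂ)
    (T : H2 →L[ℂ] H2)
    (hT : ∀ w : H2, ∀ᵐ x ∂(volume : Measure ℝ), (T w) x = matCLM (Q x) (w x))
    (z : ℂ) (w : H2) :
    ∀ᵐ x ∂(volume : Measure ℝ),
      ((algebraMap ℂ (H2 →L[ℂ] H2) z - T) w) x
        = matCLM (z • (1 : Matrix (Fin 2) (Fin 2) ℂ) - Q x) (w x) := by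
  have h1 : (algebraMap ℂ (H2 →L[ℂ] H2) z - T) w = z • w - T w := by
    rw [Algebra.algebraMap_eq_smul_one]
    simp [ContinuousLinearMap.sub_apply]
  rw [h1]
  filter_upwards [Lp.coeFn_sub (z • w) (T w), Lp.coeFn_smul z w, hT w] with x h2 h3 h4
  rw [h2, Pi.sub_apply, h3, Pi.smul_apply, h4, matCLM_sub_smul_one]

lemma not_isUnit_of_det_small (Q : ℝ → Matrix (Fin 2) (Fin 2) ℂ) (hQc : Continuous Q)
    (T : H2 →L[ℂ] H2)
    (hT : ∀ w : H2, ∀ᵐ x ∂(volume : Measure ℝ), (T w) x = matCLM (Q x) (w x))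
    (z : ℂ)
    (hdet : ∀ ε > 0, ∃ x : ℝ,
      ‖(z • (1 : Matrix (Fin 2) (Fin 2) ℂ) - Q x).det‖ < ε) :
    ¬ IsUnit (algebraMap ℂ (H2 →L[ℂ] H2) z - T) := by
  intro hU
  set V : H2 →L[ℂ] H2 := ↑hU.unit⁻¹ with hV
  -- lower bound
  have hlow : ∀ w : H2, ‖w‖ ≤ ‖V‖ * ‖(algebraMap ℂ (H2 →L[ℂ] H2) z - T) w‖ := by
    intro w
    have h1 : V ((algebraMap ℂ (H2 →L[ℂ] H2) z - T) w) = w := by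
      have h2 : (↑hU.unit⁻¹ * ↑hU.unit : H2 →L[ℂ] H2) = 1 := hU.unit.inv_mul
      have h3 : (↑hU.unit : H2 →L[ℂ] H2) = algebraMap ℂ (H2 →L[ℂ] H2) z - T := hU.unit_spec
      calc V ((algebraMap ℂ (H2 →L[ℂ] H2) z - T) w)
          = (↑hU.unit⁻¹ * ↑hU.unit : H2 →L[ℂ] H2) w := by rw [h3]; rfl
        _ = w := by rw [h2]; rfl
    conv_lhs => rw [← h1]
    exact V.le_opNorm _
  have hVnn : (0:ℝ) ≤ ‖V‖ := norm_nonneg _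
  have hne : (0:ℝ) < 5 * (‖V‖ + 1) := by positivity
  set c : ℝ := (5 * (‖V‖ + 1))⁻¹ with hcdef
  have hc : c * (5 * (‖V‖ + 1)) = 1 := inv_mul_cancel₀ (ne_of_gt hne)
  have hcpos : 0 < c := by positivity
  set δ : ℝ := c^2 with hδdef
  have hδpos : 0 < δ := by positivity
  have hsqδ : Real.sqrt δ = c := by
    rw [hδdef, Real.sqrt_sq hcpos.le]
  obtain ⟨x₀, hx₀⟩ := hdet δ hδpos
  set A : ℝ → Matrix (Fin 2) (Fin 2) ℂ := fun x => z • 1 - Q x with hA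
  obtain ⟨v, hv1, hv2⟩ := exists_unit_small (A x₀) hδpos hx₀
  -- continuity
  have hAc : Continuous A := (continuous_const).sub hQc
  have hfc : Continuous fun y => matCLM (A y) v :=
    (matCLM_continuous.comp hAc).clm_apply continuous_const
  have hcont : ContinuousAt (fun y => matCLM (A y) v) x₀ := hfc.continuousAt
  rw [Metric.continuousAt_iff] at hcont
  obtain ⟨r, hr, hball⟩ := hcont (Real.sqrt δ) (Real.sqrt_pos.mpr hδpos)
  set s : Set ℝ := Set.Icc x₀ (x₀ + r/2) with hs
  have hμs : volume s = ENNReal.ofReal (r/2) := by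
    rw [hs, Real.volume_Icc]; ring_nf
  have hμs_ne_top : volume s ≠ ⊤ := by rw [hμs]; exact ENNReal.ofReal_ne_top
  set w : H2 := indicatorConstLp 2 measurableSet_Icc hμs_ne_top v with hw
  have hwnorm : ‖w‖ = (volume s).toReal ^ (1/(2:ℝ)) := by
    rw [hw, norm_indicatorConstLp (by norm_num) (by norm_num), hv1, one_mul]
    norm_num
    rw [hμs, ENNReal.toReal_ofReal']
  have hwpos : 0 < ‖w‖ := by
    rw [hwnorm]
    apply Real.rpow_pos_of_pos
    rw [hμs, ENNReal.toReal_ofReal (by linarith)]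
    linarith
  -- pointwise bound on s
  have hbound : ∀ x ∈ s, ‖matCLM (A x) v‖ ≤ 5 * Real.sqrt δ := by
    intro x hx
    have hdist : dist x x₀ < r := by
      rw [Real.dist_eq, abs_lt]
      rcases hx with ⟨hx1, hx2⟩
      constructor <;> linarith
    have h5 := hball hdist
    rw [dist_eq_norm] at h5
    have heq : matCLM (A x) v = matCLM (A x₀) v + (matCLM (A x) v - matCLM (A x₀) v) := by abel
    calc ‖matCLM (A x) v‖ = ‖matCLM (A x₀) v + (matCLM (A x) v - matCLM (A x₀) v)‖ := by rw [← heq]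
      _ ≤ ‖matCLM (A x₀) v‖ + ‖matCLM (A x) v - matCLM (A x₀) v‖ := norm_add_le _ _
      _ ≤ 4 * Real.sqrt δ + Real.sqrt δ := add_le_add hv2 h5.le
      _ = 5 * Real.sqrt δ := by ring
  -- ae bound
  have hae : ∀ᵐ x ∂(volume : Measure ℝ),
      ‖((algebraMap ℂ (H2 →L[ℂ] H2) z - T) w) x‖ ≤ ‖((((5 * Real.sqrt δ : ℝ) : ℂ) • w : H2)) x‖ := by
    filter_upwards [apply_sub_ae Q T hT z w, indicatorConstLp_coeFn (p := 2)
        (μ := (volume : Measure ℝ)) (s := s) (hs := measurableSet_Icc) (hμs := hμs_ne_top) (c := v),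
      Lp.coeFn_smul (((5 * Real.sqrt δ : ℝ) : ℂ)) w] with x h1 h2 h3
    rw [h1, h3, Pi.smul_apply, h2]
    by_cases hmem : x ∈ s
    · rw [Set.indicator_of_mem hmem]
      rw [norm_smul]
      have : ‖((5 * Real.sqrt δ : ℝ) : ℂ)‖ = 5 * Real.sqrt δ := by
        rw [Complex.norm_real, Real.norm_of_nonneg (by positivity)]
      rw [this, hv1, mul_one]
      exact hbound x hmem
    · rw [Set.indicator_of_notMem hmem]
      simp
  have hle : ‖(algebraMap ℂ (H2 →L[ℂ] H2) z - T) w‖ ≤ (5 * Real.sqrt δ) * ‖w‖ := by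
    refine le_trans (Lp.norm_le_norm_of_ae_le hae) ?_
    rw [norm_smul, Complex.norm_real, Real.norm_of_nonneg (by positivity)]
  -- final contradiction
  have hfinal : ‖w‖ ≤ ‖V‖ * (5 * Real.sqrt δ * ‖w‖) :=
    le_trans (hlow w) (by
      apply mul_le_mul_of_nonneg_left hle hVnn)
  rw [hsqδ] at hfinal
  have h2 := mul_le_mul_of_nonneg_right hfinal (le_of_lt hne)
  have h3 : ‖V‖ * (5 * c * ‖w‖) * (5 * (‖V‖ + 1)) = 5 * ‖V‖ * ‖w‖ := by
    have h4 : ‖V‖ * (5 * c * ‖w‖) * (5 * (‖V‖ + 1)) = (c * (5 * (‖V‖ + 1))) * (5 * ‖V‖ * ‖w‖) := by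
      ring
    rw [h4, hc, one_mul]
  rw [h3] at h2
  nlinarith [hwpos, hVnn]

set_option maxHeartbeats 4000000 in
set_option synthInstance.maxHeartbeats 1000000 in
lemma isUnit_of_det_big (Q : ℝ → Matrix (Fin 2) (Fin 2) ℂ) (hQc : Continuous Q)
    (hb : BddAbove (Set.range fun x => ‖matCLM (Q x)‖))
    (T : H2 →L[ℂ] H2)
    (hT : ∀ w : H2, ∀ᵐ x ∂(volume : Measure ℝ), (T w) x = matCLM (Q x) (w x))
    (z : ℂ) {ε : ℝ} (hε : 0 < ε)
    (hdet : ∀ x : ℝ, ε ≤ ‖(z • (1 : Matrix (Fin 2) (Fin 2) ℂ) - Q x).det‖) :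
    IsUnit (algebraMap ℂ (H2 →L[ℂ] H2) z - T) := by
  obtain ⟨M, hM⟩ := hb
  have hM' : ∀ x : ℝ, ‖matCLM (Q x)‖ ≤ M := fun x => hM (Set.mem_range_self x)
  have hMnn : (0:ℝ) ≤ M := le_trans (norm_nonneg _) (hM' 0)
  set A : ℝ → Matrix (Fin 2) (Fin 2) ℂ := fun x => z • 1 - Q x with hA
  have hAc : Continuous A := continuous_const.sub hQc
  have hd : ∀ x, (A x).det ≠ 0 := by
    intro x h
    have h2 : ε ≤ ‖(A x).det‖ := hdet x
    rw [h] at h2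
    simp at h2
    linarith
  set R : ℝ → Matrix (Fin 2) (Fin 2) ℂ := fun x => ((A x).det)⁻¹ • (A x).adjugate with hR
  have hRA : ∀ x, R x * A x = 1 := by
    intro x
    rw [hR]
    rw [Matrix.smul_mul, Matrix.adjugate_mul, smul_smul, inv_mul_cancel₀ (hd x), one_smul]
  have hAR : ∀ x, A x * R x = 1 := by
    intro x
    rw [hR, Matrix.mul_smul, Matrix.mul_adjugate, smul_smul, inv_mul_cancel₀ (hd x), one_smul]
  have hRc : Continuous R :=
    ((hAc.matrix_det).inv₀ hd).smul hAc.matrix_adjugate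
  -- operator norm bounds
  have hAnorm : ∀ x, ‖matCLM (A x)‖ ≤ ‖z‖ + M := by
    intro x
    have h1 : matCLM (A x) = z • matCLM 1 - matCLM (Q x) := by
      show matCLM (z • 1 - Q x) = _
      simp [matCLM, map_sub, _root_.map_smul]
    rw [h1]
    calc ‖z • matCLM 1 - matCLM (Q x)‖ ≤ ‖z • matCLM (1 : Matrix (Fin 2) (Fin 2) ℂ)‖ + ‖matCLM (Q x)‖ :=
          norm_sub_le _ _
      _ ≤ ‖z‖ * 1 + M := by
          refine add_le_add ?_ (hM' x)
          rw [norm_smul z (matCLM 1)]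
          have : matCLM (1 : Matrix (Fin 2) (Fin 2) ℂ) = ContinuousLinearMap.id ℂ E2 := by
            simp [matCLM, _root_.map_one]; rfl
          rw [this]
          exact mul_le_mul_of_nonneg_left ContinuousLinearMap.norm_id_le (norm_nonneg z)
      _ = ‖z‖ + M := by ring
  set C : ℝ := ε⁻¹ * (4 * (‖z‖ + M)) with hC
  have hCnn : 0 ≤ C := by positivity
  have hRnorm : ∀ x, ‖matCLM (R x)‖ ≤ C := by
    intro x
    have h1 : matCLM (R x) = ((A x).det)⁻¹ • matCLM ((A x).adjugate) := by
      simp [hR, matCLM, _root_.map_smul]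
    rw [h1, norm_smul ((A x).det)⁻¹ (matCLM ((A x).adjugate))]
    have h2 : ‖((A x).det)⁻¹‖ ≤ ε⁻¹ := by
      rw [norm_inv]
      exact inv_anti₀ hε (hdet x)
    have h3 : ‖matCLM ((A x).adjugate)‖ ≤ 4 * (‖z‖ + M) := by
      refine le_trans (opNorm_le_sum_entries _) ?_
      have e00 : (A x).adjugate 0 0 = (A x) 1 1 := by rw [Matrix.adjugate_fin_two]; simp
      have e01 : (A x).adjugate 0 1 = -((A x) 0 1) := by rw [Matrix.adjugate_fin_two]; simp
      have e10 : (A x).adjugate 1 0 = -((A x) 1 0) := by rw [Matrix.adjugate_fin_two]; simp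
      have e11 : (A x).adjugate 1 1 = (A x) 0 0 := by rw [Matrix.adjugate_fin_two]; simp
      rw [e00, e01, e10, e11, norm_neg, norm_neg]
      have b1 := (entry_le_opNorm (A x) 1 1).trans (hAnorm x)
      have b2 := (entry_le_opNorm (A x) 0 1).trans (hAnorm x)
      have b3 := (entry_le_opNorm (A x) 1 0).trans (hAnorm x)
      have b4 := (entry_le_opNorm (A x) 0 0).trans (hAnorm x)
      linarith
    calc ‖((A x).det)⁻¹‖ * ‖matCLM ((A x).adjugate)‖ ≤ ε⁻¹ * (4 * (‖z‖ + M)) := by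
          apply mul_le_mul h2 h3 (norm_nonneg _) (by positivity)
      _ = C := rfl
  -- the candidate inverse, as a function
  set g : H2 → (ℝ → E2) := fun w => fun x => matCLM (R x) (w x) with hg
  haveI : SecondCountableTopologyEither ℝ (E2 →L[ℂ] E2) :=
    secondCountableTopologyEither_of_left ℝ _
  have hgm : ∀ w : H2, AEStronglyMeasurable (g w) volume := by
    intro w
    have hcont : Continuous fun p : (E2 →L[ℂ] E2) × E2 => p.1 p.2 :=
      isBoundedBilinearMap_apply.continuous
    have h1 : AEStronglyMeasurable (fun x => ((matCLM (R x) : E2 →L[ℂ] E2), (w x : E2))) volume :=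
      ((matCLM_continuous.comp hRc).aestronglyMeasurable).prodMk (Lp.aestronglyMeasurable w)
    exact hcont.comp_aestronglyMeasurable h1
  have hgle : ∀ (w : H2), ∀ x : ℝ, ‖g w x‖ ≤ C * ‖w x‖ := by
    intro w x
    calc ‖g w x‖ ≤ ‖matCLM (R x)‖ * ‖w x‖ := (matCLM (R x)).le_opNorm _
      _ ≤ C * ‖w x‖ := mul_le_mul_of_nonneg_right (hRnorm x) (norm_nonneg _)
  have hmem : ∀ w : H2, MemLp (g w) 2 volume := by
    intro w
    exact (Lp.memLp w).of_le_mul (hgm w) (Filter.Eventually.of_forall (hgle w))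
  set Sl : H2 →ₗ[ℂ] H2 :=
    { toFun := fun w => (hmem w).toLp (g w)
      map_add' := by
        intro w w'
        rw [← MemLp.toLp_add (hmem w) (hmem w')]
        refine MemLp.toLp_congr _ _ ?_
        filter_upwards [Lp.coeFn_add w w'] with x hx
        simp only [hg, Pi.add_apply, hx, map_add]
      map_smul' := by
        intro c w
        rw [RingHom.id_apply]
        have hae : g (c • w) =ᵐ[volume] c • g w := by
          filter_upwards [Lp.coeFn_smul c w] with x hx
          simp only [hg, Pi.smul_apply, hx, _root_.map_smul]
        calc (hmem (c • w)).toLp (g (c • w))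
            = ((hmem w).const_smul c).toLp (c • g w) := MemLp.toLp_congr _ _ hae
          _ = c • (hmem w).toLp (g w) := MemLp.toLp_const_smul c (hmem w) } with hSl
  have hSbound : ∀ w : H2, ‖Sl w‖ ≤ C * ‖w‖ := by
    intro w
    have h1 : ‖Sl w‖ = (eLpNorm (g w) 2 volume).toReal := by
      simp only [hSl]
      exact Lp.norm_toLp (g w) (hmem w)
    rw [h1]
    have h2 : eLpNorm (g w) 2 volume ≤ eLpNorm (((C:ℂ) • w : H2)) 2 volume := by
      rw [eLpNorm_congr_ae (Lp.coeFn_smul (C:ℂ) w)]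
      refine eLpNorm_mono_ae ?_
      refine Filter.Eventually.of_forall fun x => ?_
      rw [Pi.smul_apply, norm_smul, Complex.norm_real, Real.norm_of_nonneg hCnn]
      exact hgle w x
    calc (eLpNorm (g w) 2 volume).toReal ≤ (eLpNorm (((C:ℂ) • w : H2)) 2 volume).toReal :=
          ENNReal.toReal_mono (Lp.eLpNorm_ne_top _) h2
      _ = ‖((C:ℂ) • w : H2)‖ := (Lp.norm_def _).symm
      _ = C * ‖w‖ := by rw [norm_smul, Complex.norm_real, Real.norm_of_nonneg hCnn]
  set S : H2 →L[ℂ] H2 := Sl.mkContinuous C hSbound with hS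
  have hScoe : ∀ w : H2, (S w : ℝ → E2) =ᵐ[volume] g w := by
    intro w
    exact MemLp.coeFn_toLp (hmem w)
  have key1 : (algebraMap ℂ (H2 →L[ℂ] H2) z - T) * S = 1 := by
    refine ContinuousLinearMap.ext fun w => ?_
    refine Lp.ext ?_
    filter_upwards [apply_sub_ae Q T hT z (S w), hScoe w] with x h1 h2
    rw [ContinuousLinearMap.mul_apply, h1, h2]
    have : matCLM (z • (1 : Matrix (Fin 2) (Fin 2) ℂ) - Q x) (matCLM (R x) (w x))
        = matCLM ((A x) * (R x)) (w x) := by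
      simp [matCLM, _root_.map_mul, hA]
    rw [this, hAR x]
    simp [matCLM, _root_.map_one]
  have key2 : S * (algebraMap ℂ (H2 →L[ℂ] H2) z - T) = 1 := by
    refine ContinuousLinearMap.ext fun w => ?_
    refine Lp.ext ?_
    set u : H2 := (algebraMap ℂ (H2 →L[ℂ] H2) z - T) w with hu
    have h3 : (S u : ℝ → E2) =ᵐ[volume] g u := hScoe u
    filter_upwards [h3, apply_sub_ae Q T hT z w] with x h1 h2
    rw [ContinuousLinearMap.mul_apply, ← hu, h1]
    simp only [hg]
    rw [h2]
    have : matCLM (R x) (matCLM (z • (1 : Matrix (Fin 2) (Fin 2) ℂ) - Q x) (w x))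
        = matCLM ((R x) * (A x)) (w x) := by
      simp [matCLM, _root_.map_mul, hA]
    rw [this, hRA x]
    simp [matCLM, _root_.map_one]
  exact ⟨⟨algebraMap ℂ (H2 →L[ℂ] H2) z - T, S, key1, key2⟩, rfl⟩

end Aux

set_option maxHeartbeats 1000000 in
/-- for the multiplication operator `M_Q` (realized as a bounded operator `T`
on `L²(ℝ, ℂ²)` acting pointwise by the continuous bounded matrix function `Q`), a complex
number `z` lies in the spectrum of `T` iff for every `ε > 0` there is an `x ∈ ℝ` with
`|det(z I − Q(x))| < ε`. -/
theorem multiplication_operator_spectrum_iff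
    (Q : ℝ → Matrix (Fin 2) (Fin 2) ℂ) (hQc : Continuous Q)
    (hb : BddAbove (Set.range fun x => ‖matCLM (Q x)‖))
    (T : Lp (EuclideanSpace ℂ (Fin 2)) 2 (volume : Measure ℝ) →L[ℂ]
          Lp (EuclideanSpace ℂ (Fin 2)) 2 (volume : Measure ℝ))
    (hT : ∀ w, ∀ᵐ x ∂(volume : Measure ℝ), (T w) x = matCLM (Q x) (w x)) :
    ∀ z : ℂ, z ∈ spectrum ℂ T ↔
      ∀ ε > 0, ∃ x : ℝ,
        ‖(z • (1 : Matrix (Fin 2) (Fin 2) ℂ) - Q x).det‖ < ε := by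
  intro z
  constructor
  · intro hz ε hε
    by_contra hcon
    push_neg at hcon
    exact (spectrum.notMem_iff.mpr (isUnit_of_det_big Q hQc hb T hT z hε hcon)) hz
  · intro h
    rw [spectrum.mem_iff]
    exact not_isUnit_of_det_small Q hQc T hT z h
end

section
/- Let c ∈ ℝ with c ≠ 0, let G > 0, let 0 < Ω < ∞, and let β ∈ ℝ. Define Q : ℝ → ℂ^{2×2} by Q(ω) = c · exp((G/2)(1 − ω²/Ω²)) · R(β ω²/2), where R(b) = [[cos b, −sin b], [sin b, cos b]], and let M_Q be the bounded multiplication operator on L²(ℝ, ℂ²) given by (M_Q w)(ω) = Q(ω) w(ω). Then the spectrum of M_Q (as an element of the Banach algebra of bounded linear operators on L²(ℝ, ℂ²)) equals {λ₊(ω) : ω ∈ ℝ} ∪ {λ₋(ω) : ω ∈ ℝ} ∪ {0}, where λ_±(ω) = c · exp((G/2)(1 − ω²/Ω²)) · exp(± i β ω²/2). -/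
open MeasureTheory
open scoped ENNReal NNReal

namespace AMS

abbrev ES : Type := EuclideanSpace ℂ (Fin 2)

abbrev HS : Type :=
  MeasureTheory.Lp (EuclideanSpace ℂ (Fin 2)) 2 (MeasureTheory.volume : MeasureTheory.Measure ℝ)

noncomputable def Jmat : Matrix (Fin 2) (Fin 2) ℂ := !![0, -1; 1, 0]

noncomputable def Qm (a b : ℝ) : Matrix (Fin 2) (Fin 2) ℂ :=
  !![(a : ℂ), -(b : ℂ); (b : ℂ), (a : ℂ)]

noncomputable def Dc (a b : ℝ) (lam : ℂ) : ℂ :=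
  (((a : ℂ) + Complex.I * b) - lam) * (((a : ℂ) - Complex.I * b) - lam)

noncomputable def Amat (a b : ℝ) (lam : ℂ) : Matrix (Fin 2) (Fin 2) ℂ :=
  !![(a : ℂ) - lam, -(b : ℂ); (b : ℂ), (a : ℂ) - lam]

noncomputable def Nmat (a b : ℝ) (lam : ℂ) : Matrix (Fin 2) (Fin 2) ℂ :=
  !![((a : ℂ) - lam) / Dc a b lam, (b : ℂ) / Dc a b lam;
     -(b : ℂ) / Dc a b lam, ((a : ℂ) - lam) / Dc a b lam]

lemma Dc_eq (a b : ℝ) (lam : ℂ) : Dc a b lam = ((a : ℂ) - lam) ^ 2 + (b : ℂ) ^ 2 := by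
  unfold Dc; linear_combination (-(b : ℂ) ^ 2) * Complex.I_sq

lemma Amat_mul_Nmat (a b : ℝ) (lam : ℂ) (h : Dc a b lam ≠ 0) :
    Amat a b lam * Nmat a b lam = 1 := by
  have h' : ((a : ℂ) - lam) ^ 2 + (b : ℂ) ^ 2 ≠ 0 := by rw [← Dc_eq]; exact h
  ext i j
  fin_cases i <;> fin_cases j <;>
    simp [Amat, Nmat, Dc_eq, Matrix.mul_apply, Fin.sum_univ_two, Matrix.one_apply] <;>
    field_simp <;> ring

lemma Nmat_mul_Amat (a b : ℝ) (lam : ℂ) (h : Dc a b lam ≠ 0) :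
    Nmat a b lam * Amat a b lam = 1 := by
  have h' : ((a : ℂ) - lam) ^ 2 + (b : ℂ) ^ 2 ≠ 0 := by rw [← Dc_eq]; exact h
  ext i j
  fin_cases i <;> fin_cases j <;>
    simp [Amat, Nmat, Dc_eq, Matrix.mul_apply, Fin.sum_univ_two, Matrix.one_apply] <;>
    field_simp <;> ring

lemma Nmat_decomp (a b : ℝ) (lam : ℂ) :
    Nmat a b lam = (((a : ℂ) - lam) / Dc a b lam) • (1 : Matrix (Fin 2) (Fin 2) ℂ) +
      (-(b : ℂ) / Dc a b lam) • Jmat := by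
  ext i j
  fin_cases i <;> fin_cases j <;> simp [Nmat, Jmat, Matrix.one_apply, neg_div]

lemma smul_one_sub_Qm (a b : ℝ) (lam : ℂ) :
    lam • (1 : Matrix (Fin 2) (Fin 2) ℂ) - Qm a b = -(Amat a b lam) := by
  ext i j
  fin_cases i <;> fin_cases j <;> simp [Qm, Amat, Matrix.one_apply] <;> ring

noncomputable def vP : EuclideanSpace ℂ (Fin 2) := (WithLp.equiv 2 _).symm ![1, -Complex.I]
noncomputable def vM : EuclideanSpace ℂ (Fin 2) := (WithLp.equiv 2 _).symm ![1, Complex.I]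

lemma vP_ne_zero : vP ≠ 0 := by
  intro h
  have := congrFun (congrArg (WithLp.equiv 2 _) h) 0
  simp [vP] at this

lemma vM_ne_zero : vM ≠ 0 := by
  intro h
  have := congrFun (congrArg (WithLp.equiv 2 _) h) 0
  simp [vM] at this

lemma matCLM_Qm_vP (a b : ℝ) :
    matCLM (Qm a b) vP = ((a : ℂ) + Complex.I * b) • vP := by
  rw [vP, matCLM, WithLp.equiv_symm_apply, Matrix.toEuclideanCLM_toLp, ← WithLp.toLp_smul]
  refine congrArg _ ?_
  funext i
  fin_cases i
  · simp [Qm, Matrix.toLin'_apply, Matrix.mulVec, dotProduct, Fin.sum_univ_two]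
    ring
  · simp [Qm, Matrix.toLin'_apply, Matrix.mulVec, dotProduct, Fin.sum_univ_two]
    linear_combination (b : ℂ) * Complex.I_sq

lemma matCLM_Qm_vM (a b : ℝ) :
    matCLM (Qm a b) vM = ((a : ℂ) - Complex.I * b) • vM := by
  rw [vM, matCLM, WithLp.equiv_symm_apply, Matrix.toEuclideanCLM_toLp, ← WithLp.toLp_smul]
  refine congrArg _ ?_
  funext i
  fin_cases i
  · simp [Qm, Matrix.toLin'_apply, Matrix.mulVec, dotProduct, Fin.sum_univ_two]
    ring
  · simp [Qm, Matrix.toLin'_apply, Matrix.mulVec, dotProduct, Fin.sum_univ_two]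
    linear_combination (b : ℂ) * Complex.I_sq

lemma matCLM_decomp (p q : ℂ) :
    matCLM (p • 1 + q • Jmat) =
      p • (1 : EuclideanSpace ℂ (Fin 2) →L[ℂ] EuclideanSpace ℂ (Fin 2)) + q • matCLM Jmat := by
  simp only [matCLM, map_add, _root_.map_smul, _root_.map_one]

lemma matCLM_apply_norm_le (p q : ℂ) (x : EuclideanSpace ℂ (Fin 2)) :
    ‖matCLM (p • 1 + q • Jmat) x‖ ≤ (‖p‖ + ‖q‖ * ‖matCLM Jmat‖) * ‖x‖ := by
  rw [matCLM_decomp]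
  calc ‖(p • (1 : EuclideanSpace ℂ (Fin 2) →L[ℂ] EuclideanSpace ℂ (Fin 2)) + q • matCLM Jmat) x‖
      = ‖p • x + q • matCLM Jmat x‖ := by simp
    _ ≤ ‖p • x‖ + ‖q • matCLM Jmat x‖ := norm_add_le _ _
    _ ≤ ‖p‖ * ‖x‖ + ‖q‖ * (‖matCLM Jmat‖ * ‖x‖) := by
        gcongr
        · rw [norm_smul]
        · rw [norm_smul]; gcongr; exact (matCLM Jmat).le_opNorm x
    _ = (‖p‖ + ‖q‖ * ‖matCLM Jmat‖) * ‖x‖ := by ring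

lemma polar_p (r θ : ℝ) :
    ((r : ℝ) : ℂ) * Complex.exp (Complex.I * (θ : ℝ)) =
      ((r * Real.cos θ : ℝ) : ℂ) + Complex.I * ((r * Real.sin θ : ℝ) : ℂ) := by
  rw [mul_comm Complex.I, Complex.exp_mul_I, ← Complex.ofReal_cos, ← Complex.ofReal_sin]
  push_cast; ring

lemma polar_m (r θ : ℝ) :
    ((r : ℝ) : ℂ) * Complex.exp (-(Complex.I * (θ : ℝ))) =
      ((r * Real.cos θ : ℝ) : ℂ) - Complex.I * ((r * Real.sin θ : ℝ) : ℂ) := by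
  have h : -(Complex.I * (θ : ℝ)) = ((-θ : ℝ) : ℂ) * Complex.I := by push_cast; ring
  rw [h, Complex.exp_mul_I, ← Complex.ofReal_cos, ← Complex.ofReal_sin, Real.cos_neg,
    Real.sin_neg]
  push_cast; ring

lemma norm_polar_p (r θ : ℝ) :
    ‖((r : ℝ) : ℂ) * Complex.exp (Complex.I * (θ : ℝ))‖ = |r| := by
  rw [norm_mul, mul_comm Complex.I,
    Complex.norm_exp_ofReal_mul_I, Complex.norm_real, Real.norm_eq_abs, mul_one]

lemma norm_polar_m (r θ : ℝ) :
    ‖((r : ℝ) : ℂ) * Complex.exp (-(Complex.I * (θ : ℝ)))‖ = |r| := by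
  have h : -(Complex.I * (θ : ℝ)) = ((-θ : ℝ) : ℂ) * Complex.I := by push_cast; ring
  rw [h, norm_mul,
    Complex.norm_exp_ofReal_mul_I, Complex.norm_real, Real.norm_eq_abs, mul_one]

end AMS

set_option maxHeartbeats 4000000 in
/-- the spectrum of the asymptotic monodromy multiplication operator with
Fourier symbol `Q(ω) = c e^{(G/2)(1-ω²/Ω²)} R(βω²/2)` is the pair of counter-rotating
spirals `λ_±(ω) = c e^{(G/2)(1-ω²/Ω²)} e^{± i βω²/2}` together with `0`. -/
theorem asymptotic_monodromy_spectrum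
    (c G Ω β : ℝ) (hc : c ≠ 0) (hG : 0 < G) (hΩ : 0 < Ω)
    (Q : ℝ → Matrix (Fin 2) (Fin 2) ℂ)
    (hQ : ∀ ω : ℝ, Q ω = ((c * Real.exp (G / 2 * (1 - ω ^ 2 / Ω ^ 2)) : ℝ) : ℂ) •
      !![((Real.cos (β * ω ^ 2 / 2) : ℝ) : ℂ), -((Real.sin (β * ω ^ 2 / 2) : ℝ) : ℂ);
         ((Real.sin (β * ω ^ 2 / 2) : ℝ) : ℂ), ((Real.cos (β * ω ^ 2 / 2) : ℝ) : ℂ)])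
    (T : Lp (EuclideanSpace ℂ (Fin 2)) 2 (volume : Measure ℝ) →L[ℂ]
          Lp (EuclideanSpace ℂ (Fin 2)) 2 (volume : Measure ℝ))
    (hT : ∀ w, ∀ᵐ ω ∂(volume : Measure ℝ), (T w) ω = matCLM (Q ω) (w ω)) :
    spectrum ℂ T =
      {z : ℂ | ∃ ω : ℝ, z = ((c * Real.exp (G / 2 * (1 - ω ^ 2 / Ω ^ 2)) : ℝ) : ℂ) *
          Complex.exp (Complex.I * (β * ω ^ 2 / 2 : ℝ))} ∪
      {z : ℂ | ∃ ω : ℝ, z = ((c * Real.exp (G / 2 * (1 - ω ^ 2 / Ω ^ 2)) : ℝ) : ℂ) *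
          Complex.exp (-(Complex.I * (β * ω ^ 2 / 2 : ℝ)))} ∪
      {0} := by
  classical
  -- basic scalar functions
  set rf : ℝ → ℝ := fun ω => c * Real.exp (G / 2 * (1 - ω ^ 2 / Ω ^ 2)) with hrf
  set θf : ℝ → ℝ := fun ω => β * ω ^ 2 / 2 with hθf
  set af : ℝ → ℝ := fun ω => rf ω * Real.cos (θf ω) with haf
  set bf : ℝ → ℝ := fun ω => rf ω * Real.sin (θf ω) with hbf
  set lamp : ℝ → ℂ := fun ω => ((rf ω : ℝ) : ℂ) * Complex.exp (Complex.I * ((θf ω : ℝ) : ℂ))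
    with hlampdef
  set lamm : ℝ → ℂ := fun ω => ((rf ω : ℝ) : ℂ) * Complex.exp (-(Complex.I * ((θf ω : ℝ) : ℂ)))
    with hlammdef
  have hlampab : ∀ ω, lamp ω = ((af ω : ℝ) : ℂ) + Complex.I * ((bf ω : ℝ) : ℂ) := fun ω =>
    AMS.polar_p (rf ω) (θf ω)
  have hlammab : ∀ ω, lamm ω = ((af ω : ℝ) : ℂ) - Complex.I * ((bf ω : ℝ) : ℂ) := fun ω =>
    AMS.polar_m (rf ω) (θf ω)
  have hQm : ∀ ω, Q ω = AMS.Qm (af ω) (bf ω) := by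
    intro ω
    rw [hQ ω]
    ext i j
    fin_cases i <;> fin_cases j <;>
      simp [AMS.Qm, haf, hbf, hrf, hθf] <;> push_cast <;> ring
  -- continuity of the basic functions
  have hcrf : Continuous rf := by
    apply continuous_const.mul
    exact Real.continuous_exp.comp
      (continuous_const.mul (continuous_const.sub ((continuous_pow 2).div_const _)))
  have hcθf : Continuous θf := (continuous_const.mul (continuous_pow 2)).div_const _
  have hclamp : Continuous lamp := by
    apply (Complex.continuous_ofReal.comp hcrf).mul
    exact Complex.continuous_exp.comp (continuous_const.mul (Complex.continuous_ofReal.comp hcθf))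
  have hclamm : Continuous lamm := by
    apply (Complex.continuous_ofReal.comp hcrf).mul
    exact Complex.continuous_exp.comp
      ((continuous_const.mul (Complex.continuous_ofReal.comp hcθf)).neg)
  have hnormp : ∀ ω, ‖lamp ω‖ = |rf ω| := fun ω => AMS.norm_polar_p (rf ω) (θf ω)
  have hnormm : ∀ ω, ‖lamm ω‖ = |rf ω| := fun ω => AMS.norm_polar_m (rf ω) (θf ω)
  have hrfb : ∀ ω, |rf ω| ≤ |c| * Real.exp (G / 2) := by
    intro ω
    show |c * Real.exp (G / 2 * (1 - ω ^ 2 / Ω ^ 2))| ≤ _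
    rw [abs_mul, abs_of_pos (Real.exp_pos _)]
    have harg : G / 2 * (1 - ω ^ 2 / Ω ^ 2) ≤ G / 2 := by
      have h0 : 0 ≤ ω ^ 2 / Ω ^ 2 := by positivity
      nlinarith
    exact mul_le_mul_of_nonneg_left (Real.exp_le_exp.mpr harg) (abs_nonneg c)
  -- the pointwise action of the shifted operator
  have hM : ∀ (z : ℂ) (w : AMS.HS), ∀ᵐ ω ∂(volume : Measure ℝ),
      ((algebraMap ℂ (AMS.HS →L[ℂ] AMS.HS) z - T) w) ω = matCLM (z • 1 - Q ω) (w ω) := by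
    intro z w
    have he : ((algebraMap ℂ (AMS.HS →L[ℂ] AMS.HS) z - T) w) = z • w - T w := by
      simp [Algebra.algebraMap_eq_smul_one]
    rw [he]
    filter_upwards [Lp.coeFn_sub (z • w) (T w), Lp.coeFn_smul z w, hT w] with ω h1 h2 h3
    have hmat : matCLM (z • 1 - Q ω) (w ω) = z • (w ω) - matCLM (Q ω) (w ω) := by
      simp only [matCLM, map_sub, _root_.map_smul, _root_.map_one]
      simp
    rw [hmat, h1, Pi.sub_apply, h2, Pi.smul_apply, h3]
  -- Weyl-type criterion: constant eigenvector curves give spectrum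
  have hWeyl : ∀ (lam₀ : ℂ) (vv : AMS.ES), vv ≠ 0 → ∀ (eig : ℝ → ℂ), Continuous eig →
      (∀ ω, matCLM (Q ω) vv = eig ω • vv) → ∀ ω₀ : ℝ, eig ω₀ = lam₀ →
      lam₀ ∈ spectrum ℂ T := by
    intro lam₀ vv hvv eig hceig heig ω₀ heq
    by_contra hnot
    have hu := spectrum.notMem_iff.mp hnot
    obtain ⟨u, hu⟩ := hu
    set B : AMS.HS →L[ℂ] AMS.HS := (↑u⁻¹ : AMS.HS →L[ℂ] AMS.HS) with hB
    set M : AMS.HS →L[ℂ] AMS.HS := algebraMap ℂ (AMS.HS →L[ℂ] AMS.HS) lam₀ - T with hMdef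
    have hlow : ∀ w : AMS.HS, ‖w‖ ≤ ‖B‖ * ‖M w‖ := by
      intro w
      have h1 : B (M w) = w := by
        have : (↑u⁻¹ * ↑u : AMS.HS →L[ℂ] AMS.HS) = 1 := u.inv_mul
        calc B (M w) = (↑u⁻¹ * ↑u : AMS.HS →L[ℂ] AMS.HS) w := by rw [hu]; rfl
          _ = w := by rw [this]; rfl
      calc ‖w‖ = ‖B (M w)‖ := by rw [h1]
        _ ≤ ‖B‖ * ‖M w‖ := B.le_opNorm _
    set ε : ℝ := 1 / (2 * (‖B‖ + 1)) with hεdef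
    have hBnn : (0:ℝ) ≤ ‖B‖ := norm_nonneg _
    have hε : 0 < ε := by rw [hεdef]; positivity
    obtain ⟨δ, hδ, hball⟩ := Metric.continuousAt_iff.mp (hceig.continuousAt (x := ω₀)) ε hε
    set s : Set ℝ := Metric.ball ω₀ δ with hsdef
    have hμs : (volume : Measure ℝ) s ≠ ⊤ := by
      rw [hsdef, Real.volume_ball]; exact ENNReal.ofReal_ne_top
    set w : AMS.HS := indicatorConstLp 2 measurableSet_ball hμs vv with hwdef
    have hwpos : 0 < ‖w‖ := by
      rw [hwdef, norm_indicatorConstLp (by norm_num) (by norm_num)]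
      apply mul_pos (norm_pos_iff.mpr hvv)
      apply Real.rpow_pos_of_pos
      rw [Real.volume_real_ball (by linarith)]
      linarith
    -- pointwise bound on M w
    have hae : ∀ᵐ ω ∂(volume : Measure ℝ), ‖(M w) ω‖ ≤ ‖(ε : ℂ) • (w ω)‖ := by
      filter_upwards [hM lam₀ w, indicatorConstLp_coeFn (p := 2)
        (hs := measurableSet_ball (x := ω₀) (ε := δ)) (hμs := hμs) (c := vv)] with ω h1 h2
      rw [h1, h2]
      by_cases hωs : ω ∈ s
      · rw [Set.indicator_of_mem hωs]
        have hmat : matCLM (lam₀ • 1 - Q ω) vv = (lam₀ - eig ω) • vv := by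
          have : matCLM (lam₀ • 1 - Q ω) vv = lam₀ • vv - matCLM (Q ω) vv := by
            simp only [matCLM, map_sub, _root_.map_smul, _root_.map_one]
            simp
          rw [this, heig ω, sub_smul]
        rw [hmat, norm_smul, norm_smul]
        gcongr
        have hd : dist (eig ω) (eig ω₀) < ε := hball (by exact hωs)
        rw [← heq]
        calc ‖eig ω₀ - eig ω‖ = dist (eig ω) (eig ω₀) := by
              rw [dist_eq_norm, norm_sub_rev]
          _ ≤ ε := le_of_lt hd
          _ ≤ ‖(ε : ℂ)‖ := by rw [Complex.norm_real, Real.norm_eq_abs]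
                              exact le_abs_self ε
      · rw [Set.indicator_of_notMem hωs]
        simp
    have hMwle : ‖M w‖ ≤ ε * ‖w‖ := by
      have h1 : ‖M w‖ = (eLpNorm (⇑(M w)) 2 (volume : Measure ℝ)).toReal := Lp.norm_def _
      have h2 : eLpNorm (⇑(M w)) 2 (volume : Measure ℝ) ≤
          eLpNorm ((ε : ℂ) • ⇑w) 2 (volume : Measure ℝ) := by
        apply eLpNorm_mono_ae
        filter_upwards [hae] with ω h
        simpa using h
      have h3 : eLpNorm ((ε : ℂ) • ⇑w) 2 (volume : Measure ℝ) =
          ‖(ε : ℂ)‖₊ • eLpNorm (⇑w) 2 (volume : Measure ℝ) := eLpNorm_const_smul _ _ _ _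
      rw [h1]
      calc (eLpNorm (⇑(M w)) 2 (volume : Measure ℝ)).toReal
          ≤ (eLpNorm ((ε : ℂ) • ⇑w) 2 (volume : Measure ℝ)).toReal := by
            apply ENNReal.toReal_mono _ h2
            rw [h3]
            exact ENNReal.mul_ne_top (by simp) (Lp.eLpNorm_ne_top w)
        _ = ε * ‖w‖ := by
            rw [h3, ENNReal.smul_def, smul_eq_mul, ENNReal.toReal_mul, ← Lp.norm_def]
            have hεc : ((‖(ε : ℂ)‖₊ : ℝ≥0∞)).toReal = ε := by
              simp [Complex.norm_real, abs_of_pos hε]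
            rw [hεc]
    have : ‖w‖ ≤ ‖B‖ * (ε * ‖w‖) := le_trans (hlow w) (mul_le_mul_of_nonneg_left hMwle hBnn)
    have hlt : ‖B‖ * ε < 1 := by
      rw [hεdef]
      rw [mul_one_div, div_lt_one (by positivity)]
      linarith
    nlinarith
  -- the two spiral curves lie in the spectrum
  have hQvM : ∀ ω, matCLM (Q ω) AMS.vM = lamm ω • AMS.vM := by
    intro ω
    rw [hQm ω, AMS.matCLM_Qm_vM, hlammab ω]
  have hQvP : ∀ ω, matCLM (Q ω) AMS.vP = lamp ω • AMS.vP := by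
    intro ω
    rw [hQm ω, AMS.matCLM_Qm_vP, hlampab ω]
  have hmemP : ∀ ω₀, lamp ω₀ ∈ spectrum ℂ T := fun ω₀ =>
    hWeyl (lamp ω₀) AMS.vP AMS.vP_ne_zero lamp hclamp hQvP ω₀ rfl
  have hmemM : ∀ ω₀, lamm ω₀ ∈ spectrum ℂ T := fun ω₀ =>
    hWeyl (lamm ω₀) AMS.vM AMS.vM_ne_zero lamm hclamm hQvM ω₀ rfl
  -- 0 is in the spectrum (closure of the spirals)
  have htendrf : Filter.Tendsto (fun ω => |c| * Real.exp (G / 2 * (1 - ω ^ 2 / Ω ^ 2)))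
      Filter.atTop (nhds 0) := by
    have h1 : Filter.Tendsto (fun ω : ℝ => ω ^ 2) Filter.atTop Filter.atTop :=
      Filter.tendsto_pow_atTop two_ne_zero
    have h2 : Filter.Tendsto (fun ω : ℝ => ω ^ 2 / Ω ^ 2) Filter.atTop Filter.atTop :=
      h1.atTop_div_const (by positivity)
    have h3 : Filter.Tendsto (fun ω : ℝ => -(ω ^ 2 / Ω ^ 2)) Filter.atTop Filter.atBot :=
      Filter.tendsto_neg_atTop_atBot.comp h2
    have h4 : Filter.Tendsto (fun ω : ℝ => 1 + -(ω ^ 2 / Ω ^ 2)) Filter.atTop Filter.atBot :=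
      Filter.tendsto_atBot_add_const_left _ 1 h3
    have h5 : Filter.Tendsto (fun ω : ℝ => G / 2 * (1 - ω ^ 2 / Ω ^ 2))
        Filter.atTop Filter.atBot := by
      have := h4.const_mul_atBot (r := G / 2) (by positivity)
      simpa [sub_eq_add_neg] using this
    have h6 := Real.tendsto_exp_atBot.comp h5
    have := h6.const_mul |c|
    simpa using this
  have hmem0 : (0 : ℂ) ∈ spectrum ℂ T := by
    have htend : Filter.Tendsto lamp Filter.atTop (nhds 0) := by
      apply squeeze_zero_norm _ htendrf
      intro ω
      rw [hnormp ω, hrf]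
      rw [abs_mul, abs_of_pos (Real.exp_pos _)]
    exact (spectrum.isClosed (𝕜 := ℂ) T).mem_of_tendsto htend
      (Filter.Eventually.of_forall fun ω => hmemP ω)
  -- conclude
  apply Set.Subset.antisymm
  · -- spectrum ⊆ spirals ∪ {0}
    intro lam hlam
    by_contra hnS
    simp only [Set.mem_union, Set.mem_setOf_eq, Set.mem_singleton_iff, not_or,
      not_exists] at hnS
    obtain ⟨⟨hnp, hnm⟩, hn0⟩ := hnS
    have hnp' : ∀ ω, lamp ω ≠ lam := fun ω h => hnp ω h.symm
    have hnm' : ∀ ω, lamm ω ≠ lam := fun ω h => hnm ω h.symm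
    -- separation from the spirals
    have hlamnorm : 0 < ‖lam‖ := norm_pos_iff.mpr hn0
    obtain ⟨d, hd, hsep⟩ : ∃ d : ℝ, 0 < d ∧ ∀ ω, d ≤ ‖lamp ω - lam‖ ∧ d ≤ ‖lamm ω - lam‖ := by
      set L := Real.log (‖lam‖ / (2 * |c|)) with hL
      set R := Real.sqrt (max 0 (Ω ^ 2 * (1 - 2 * L / G))) with hRdef
      have hRnn : 0 ≤ R := Real.sqrt_nonneg _
      have hcpos : 0 < |c| := abs_pos.mpr hc
      have hsmall : ∀ ω : ℝ, R ≤ |ω| → |rf ω| ≤ ‖lam‖ / 2 := by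
        intro ω hω
        have hω2 : Ω ^ 2 * (1 - 2 * L / G) ≤ ω ^ 2 := by
          have h1 : R ^ 2 ≤ ω ^ 2 := by
            rw [← sq_abs ω]
            exact pow_le_pow_left₀ hRnn hω 2
          have h2 : R ^ 2 = max 0 (Ω ^ 2 * (1 - 2 * L / G)) :=
            Real.sq_sqrt (le_max_left _ _)
          calc Ω ^ 2 * (1 - 2 * L / G) ≤ max 0 (Ω ^ 2 * (1 - 2 * L / G)) := le_max_right _ _
            _ = R ^ 2 := h2.symm
            _ ≤ ω ^ 2 := h1
        have hΩ2 : (0:ℝ) < Ω ^ 2 := by positivity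
        have h1 : 1 - 2 * L / G ≤ ω ^ 2 / Ω ^ 2 := by
          rw [le_div_iff₀ hΩ2]
          linarith [hω2]
        have h2 : 1 - ω ^ 2 / Ω ^ 2 ≤ 2 * L / G := by linarith
        have h3 : G / 2 * (1 - ω ^ 2 / Ω ^ 2) ≤ L := by
          calc G / 2 * (1 - ω ^ 2 / Ω ^ 2) ≤ G / 2 * (2 * L / G) := by
                apply mul_le_mul_of_nonneg_left h2 (by positivity)
            _ = L := by field_simp
        calc |rf ω| = |c| * Real.exp (G / 2 * (1 - ω ^ 2 / Ω ^ 2)) := by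
              rw [hrf, abs_mul, abs_of_pos (Real.exp_pos _)]
          _ ≤ |c| * Real.exp L := by gcongr
          _ = |c| * (‖lam‖ / (2 * |c|)) := by
              rw [hL, Real.exp_log (by positivity)]
          _ = ‖lam‖ / 2 := by field_simp
      have hgc : Continuous (fun ω => min ‖lamp ω - lam‖ ‖lamm ω - lam‖) :=
        ((hclamp.sub continuous_const).norm).min ((hclamm.sub continuous_const).norm)
      obtain ⟨ω₁, hω₁mem, hω₁min⟩ := (isCompact_Icc (a := -R) (b := R)).exists_isMinOn
        ⟨0, by constructor <;> simp [hRnn] <;> linarith⟩ hgc.continuousOn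
      have hppos : 0 < ‖lamp ω₁ - lam‖ := norm_pos_iff.mpr (sub_ne_zero_of_ne (hnp' ω₁))
      have hmpos : 0 < ‖lamm ω₁ - lam‖ := norm_pos_iff.mpr (sub_ne_zero_of_ne (hnm' ω₁))
      refine ⟨min (min ‖lamp ω₁ - lam‖ ‖lamm ω₁ - lam‖) (‖lam‖ / 2), by positivity, ?_⟩
      intro ω
      by_cases hcase : |ω| ≤ R
      · have hmem : ω ∈ Set.Icc (-R) R := abs_le.mp hcase
        have := hω₁min hmem
        constructor
        · calc min (min ‖lamp ω₁ - lam‖ ‖lamm ω₁ - lam‖) (‖lam‖ / 2)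
              ≤ min ‖lamp ω₁ - lam‖ ‖lamm ω₁ - lam‖ := min_le_left _ _
            _ ≤ min ‖lamp ω - lam‖ ‖lamm ω - lam‖ := this
            _ ≤ ‖lamp ω - lam‖ := min_le_left _ _
        · calc min (min ‖lamp ω₁ - lam‖ ‖lamm ω₁ - lam‖) (‖lam‖ / 2)
              ≤ min ‖lamp ω₁ - lam‖ ‖lamm ω₁ - lam‖ := min_le_left _ _
            _ ≤ min ‖lamp ω - lam‖ ‖lamm ω - lam‖ := this
            _ ≤ ‖lamm ω - lam‖ := min_le_right _ _
      · have hR : R ≤ |ω| := le_of_lt (not_le.mp hcase)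
        have h1 := hsmall ω hR
        constructor
        · calc min (min ‖lamp ω₁ - lam‖ ‖lamm ω₁ - lam‖) (‖lam‖ / 2)
              ≤ ‖lam‖ / 2 := min_le_right _ _
            _ ≤ ‖lam‖ - ‖lamp ω‖ := by rw [hnormp ω]; linarith
            _ ≤ ‖lam - lamp ω‖ := by
                have := norm_sub_norm_le lam (lamp ω)
                linarith
            _ = ‖lamp ω - lam‖ := norm_sub_rev _ _
        · calc min (min ‖lamp ω₁ - lam‖ ‖lamm ω₁ - lam‖) (‖lam‖ / 2)
              ≤ ‖lam‖ / 2 := min_le_right _ _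
            _ ≤ ‖lam‖ - ‖lamm ω‖ := by rw [hnormm ω]; linarith
            _ ≤ ‖lam - lamm ω‖ := by
                have := norm_sub_norm_le lam (lamm ω)
                linarith
            _ = ‖lamm ω - lam‖ := norm_sub_rev _ _
    -- the pointwise inverse
    set Df : ℝ → ℂ := fun ω => (lamp ω - lam) * (lamm ω - lam) with hDfdef
    have hDeq : ∀ ω, Df ω = AMS.Dc (af ω) (bf ω) lam := by
      intro ω
      rw [hDfdef]
      simp only [AMS.Dc, ← hlampab, ← hlammab]
    have hDne : ∀ ω, Df ω ≠ 0 := fun ω =>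
      mul_ne_zero (sub_ne_zero_of_ne (hnp' ω)) (sub_ne_zero_of_ne (hnm' ω))
    have hDnorm : ∀ ω, d ^ 2 ≤ ‖Df ω‖ := by
      intro ω
      rw [hDfdef]
      calc d ^ 2 = d * d := sq d
        _ ≤ ‖lamp ω - lam‖ * ‖lamm ω - lam‖ := by
            apply mul_le_mul (hsep ω).1 (hsep ω).2 (le_of_lt hd) (norm_nonneg _)
        _ = ‖(lamp ω - lam) * (lamm ω - lam)‖ := (norm_mul _ _).symm
    set uf : ℝ → ℂ := fun ω => (((af ω : ℝ) : ℂ) - lam) / Df ω with hufdef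
    set qf : ℝ → ℂ := fun ω => -((bf ω : ℝ) : ℂ) / Df ω with hqfdef
    have hNdecomp : ∀ ω, AMS.Nmat (af ω) (bf ω) lam =
        uf ω • (1 : Matrix (Fin 2) (Fin 2) ℂ) + qf ω • AMS.Jmat := by
      intro ω
      rw [AMS.Nmat_decomp, ← hDeq ω]
    -- uniform bound
    set X : ℝ := |c| * Real.exp (G / 2) with hXdef
    have hXnn : 0 ≤ X := by positivity
    set Cb : ℝ := (X + ‖lam‖) / d ^ 2 + X / d ^ 2 * ‖matCLM AMS.Jmat‖ with hCbdef
    have hCbnn : 0 ≤ Cb := by positivity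
    have hafb : ∀ ω, |af ω| ≤ X := by
      intro ω
      rw [haf]
      calc |rf ω * Real.cos (θf ω)| = |rf ω| * |Real.cos (θf ω)| := abs_mul _ _
        _ ≤ |rf ω| * 1 := by gcongr; exact Real.abs_cos_le_one _
        _ ≤ X := by rw [mul_one]; exact hrfb ω
    have hbfb : ∀ ω, |bf ω| ≤ X := by
      intro ω
      rw [hbf]
      calc |rf ω * Real.sin (θf ω)| = |rf ω| * |Real.sin (θf ω)| := abs_mul _ _
        _ ≤ |rf ω| * 1 := by gcongr; exact Real.abs_sin_le_one _
        _ ≤ X := by rw [mul_one]; exact hrfb ω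
    have hufb : ∀ ω, ‖uf ω‖ ≤ (X + ‖lam‖) / d ^ 2 := by
      intro ω
      rw [hufdef, norm_div]
      apply div_le_div₀ (by positivity) _ (by positivity) (hDnorm ω)
      calc ‖((af ω : ℝ) : ℂ) - lam‖ ≤ ‖((af ω : ℝ) : ℂ)‖ + ‖lam‖ := norm_sub_le _ _
        _ ≤ X + ‖lam‖ := by
            gcongr
            rw [Complex.norm_real, Real.norm_eq_abs]
            exact hafb ω
    have hqfb : ∀ ω, ‖qf ω‖ ≤ X / d ^ 2 := by
      intro ω
      rw [hqfdef, norm_div]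
      apply div_le_div₀ hXnn _ (by positivity) (hDnorm ω)
      rw [norm_neg, Complex.norm_real, Real.norm_eq_abs]
      exact hbfb ω
    have hbound : ∀ (ω : ℝ) (x : AMS.ES), ‖matCLM (AMS.Nmat (af ω) (bf ω) lam) x‖ ≤ Cb * ‖x‖ := by
      intro ω x
      rw [hNdecomp ω]
      calc ‖matCLM (uf ω • 1 + qf ω • AMS.Jmat) x‖
          ≤ (‖uf ω‖ + ‖qf ω‖ * ‖matCLM AMS.Jmat‖) * ‖x‖ := AMS.matCLM_apply_norm_le _ _ _
        _ ≤ Cb * ‖x‖ := by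
            gcongr ?_ * ‖x‖
            rw [hCbdef]
            gcongr
            · exact hufb ω
            · exact hqfb ω
    -- continuity of uf, qf
    have hcaf : Continuous af := hcrf.mul (Real.continuous_cos.comp hcθf)
    have hcbf : Continuous bf := hcrf.mul (Real.continuous_sin.comp hcθf)
    have hcDf : Continuous Df :=
      (hclamp.sub continuous_const).mul (hclamm.sub continuous_const)
    have hcuf : Continuous uf :=
      ((Complex.continuous_ofReal.comp hcaf).sub continuous_const).div hcDf hDne
    have hcqf : Continuous qf :=
      (Complex.continuous_ofReal.comp hcbf).neg.div hcDf hDne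
    -- the inverse operator: show bijectivity of M
    set M : AMS.HS →L[ℂ] AMS.HS := algebraMap ℂ (AMS.HS →L[ℂ] AMS.HS) lam - T with hMdef
    have hQA : ∀ ω, lam • (1 : Matrix (Fin 2) (Fin 2) ℂ) - Q ω =
        -(AMS.Amat (af ω) (bf ω) lam) := by
      intro ω
      rw [hQm ω, AMS.smul_one_sub_Qm]
    have hker : ∀ w : AMS.HS, M w = 0 → w = 0 := by
      intro w hw
      rw [Lp.eq_zero_iff_ae_eq_zero]
      have h0 : ⇑(M w) =ᵐ[(volume : Measure ℝ)] 0 := by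
        rw [hw]; exact Lp.coeFn_zero _ _ _
      filter_upwards [hM lam w, h0] with ω h1 h2
      have h3 : matCLM (lam • 1 - Q ω) (w ω) = 0 := by rw [← h1, h2]; rfl
      rw [hQA ω] at h3
      have h4 : matCLM (AMS.Amat (af ω) (bf ω) lam) (w ω) = 0 := by
        have : matCLM (-(AMS.Amat (af ω) (bf ω) lam)) (w ω) =
            -(matCLM (AMS.Amat (af ω) (bf ω) lam) (w ω)) := by
          simp only [matCLM, map_neg]
          simp
        rw [this] at h3
        exact neg_eq_zero.mp h3
      have h5 : w ω = matCLM (AMS.Nmat (af ω) (bf ω) lam)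
          (matCLM (AMS.Amat (af ω) (bf ω) lam) (w ω)) := by
        have hmul : matCLM (AMS.Nmat (af ω) (bf ω) lam) ∘L
            matCLM (AMS.Amat (af ω) (bf ω) lam) = matCLM 1 := by
          rw [← AMS.Nmat_mul_Amat (af ω) (bf ω) lam (hDeq ω ▸ hDne ω)]
          simp only [matCLM, map_mul]
          rfl
        have := congrFun (congrArg (fun (f : AMS.ES →L[ℂ] AMS.ES) => (f : AMS.ES → AMS.ES)) hmul) (w ω)
        simp only [ContinuousLinearMap.coe_comp', Function.comp_apply] at this
        rw [this]
        simp only [matCLM, _root_.map_one]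
        rfl
      rw [h5, h4]
      simp
    have hinj : Function.Injective (⇑M) := by
      intro x y hxy
      have : M (x - y) = 0 := by rw [map_sub, hxy, sub_self]
      have := hker _ this
      exact sub_eq_zero.mp this
    have hsurj : Function.Surjective (⇑M) := by
      intro v
      set w₀ : ℝ → AMS.ES := fun ω => uf ω • (v ω) + qf ω • (matCLM AMS.Jmat (v ω)) with hw₀def
      have hw₀N : ∀ ω, w₀ ω = matCLM (AMS.Nmat (af ω) (bf ω) lam) (v ω) := by
        intro ω
        rw [hw₀def, hNdecomp ω, AMS.matCLM_decomp]
        simp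
      have hmeas : AEStronglyMeasurable w₀ (volume : Measure ℝ) := by
        apply AEStronglyMeasurable.add
        · exact (hcuf.aestronglyMeasurable).smul (Lp.aestronglyMeasurable v)
        · exact (hcqf.aestronglyMeasurable).smul
            (((matCLM AMS.Jmat).continuous).comp_aestronglyMeasurable
              (Lp.aestronglyMeasurable v))
      have hmemLp : MemLp w₀ 2 (volume : Measure ℝ) := by
        apply MemLp.of_le ((Lp.memLp v).const_smul Cb) hmeas
        apply Filter.Eventually.of_forall
        intro ω
        rw [hw₀N ω]
        calc ‖matCLM (AMS.Nmat (af ω) (bf ω) lam) (v ω)‖ ≤ Cb * ‖v ω‖ := hbound ω (v ω)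
          _ = ‖Cb • (v ω)‖ := by
              rw [norm_smul, Real.norm_eq_abs, abs_of_nonneg hCbnn]
          _ = ‖(Cb • ⇑v) ω‖ := rfl
      set w : AMS.HS := hmemLp.toLp w₀ with hwdef
      refine ⟨-w, ?_⟩
      have hMw : M w = -v := by
        apply Lp.ext
        have hcoe : ⇑(-v) =ᵐ[(volume : Measure ℝ)] -⇑v := Lp.coeFn_neg v
        filter_upwards [hM lam w, hmemLp.coeFn_toLp, hcoe] with ω h1 h2 h3
        rw [h1, h3]
        have hw₂ : w ω = w₀ ω := h2
        rw [hw₂, hw₀N ω, hQA ω]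
        have hcomp : matCLM (-(AMS.Amat (af ω) (bf ω) lam))
            (matCLM (AMS.Nmat (af ω) (bf ω) lam) (v ω)) = -(v ω) := by
          have hmul : matCLM (AMS.Amat (af ω) (bf ω) lam) ∘L
              matCLM (AMS.Nmat (af ω) (bf ω) lam) = matCLM 1 := by
            rw [← AMS.Amat_mul_Nmat (af ω) (bf ω) lam (hDeq ω ▸ hDne ω)]
            simp only [matCLM, map_mul]
            rfl
          have hneg : matCLM (-(AMS.Amat (af ω) (bf ω) lam)) =
              -(matCLM (AMS.Amat (af ω) (bf ω) lam)) := by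
            simp only [matCLM, map_neg]
          rw [hneg]
          have := congrFun (congrArg (fun (f : AMS.ES →L[ℂ] AMS.ES) => (f : AMS.ES → AMS.ES)) hmul)
            (v ω)
          simp only [ContinuousLinearMap.coe_comp', Function.comp_apply] at this
          simp only [ContinuousLinearMap.neg_apply]
          rw [this]
          simp only [matCLM, _root_.map_one]
          rfl
        rw [hcomp]
        rfl
      rw [map_neg, hMw, neg_neg]
    have hunit : IsUnit M := ContinuousLinearMap.isUnit_iff_bijective.mpr ⟨hinj, hsurj⟩
    exact (spectrum.notMem_iff.mpr hunit) hlam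
  · -- spirals ∪ {0} ⊆ spectrum
    rintro z ((⟨ω, rfl⟩ | ⟨ω, rfl⟩) | rfl)
    · exact hmemP ω
    · exact hmemM ω
    · exact hmem0
end

section
/- Let c ∈ ℝ with c ≠ 0, let G > 0, let 0 < Ω < ∞, and let β ∈ ℝ. Define Q : ℝ → ℂ^{2×2} by Q(ω) = c · exp((G/2)(1 − ω²/Ω²)) · R(β ω²/2), where R(b) = [[cos b, −sin b], [sin b, cos b]]. Then the multiplication operator M_Q on L²(ℝ, ℂ²), given by (M_Q w)(ω) = Q(ω) w(ω), has no eigenvalues: for every λ ∈ ℂ and every w ∈ L²(ℝ, ℂ²), if Q(ω) w(ω) = λ w(ω) for almost every ω ∈ ℝ, then w = 0 almost everywhere. -/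
open MeasureTheory

lemma detFactor (r b : ℝ) (z : ℂ) :
    ((((r:ℂ) • !![((Real.cos b : ℝ) : ℂ), -((Real.sin b : ℝ) : ℂ);
       ((Real.sin b : ℝ) : ℂ), ((Real.cos b : ℝ) : ℂ)]) - z • 1).det)
    = ((r:ℂ) * Complex.cos b + Complex.I * (r * Complex.sin b) - z) *
      ((r:ℂ) * Complex.cos b - Complex.I * (r * Complex.sin b) - z) := by
  simp [Matrix.det_fin_two, Matrix.smul_apply, Matrix.one_apply, Complex.ofReal_sin,
    Complex.ofReal_cos]
  linear_combination ((r:ℂ)*Complex.sin b)^2 * Complex.I_sq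

lemma absUnit (b : ℝ) : ‖Complex.cos b + Complex.I * Complex.sin b‖ = 1 := by
  have := Complex.norm_exp_ofReal_mul_I b
  rwa [Complex.exp_mul_I, mul_comm (Complex.sin _)] at this

lemma absPlus (r b : ℝ) :
    ‖(r:ℂ) * Complex.cos b + Complex.I * (r * Complex.sin b)‖ = |r| := by
  have : (r:ℂ) * Complex.cos b + Complex.I * (r * Complex.sin b)
      = (r:ℂ) * (Complex.cos b + Complex.I * Complex.sin b) := by ring
  rw [this, norm_mul, absUnit, Complex.norm_real, Real.norm_eq_abs, mul_one]

lemma absMinus (r b : ℝ) :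
    ‖(r:ℂ) * Complex.cos b - Complex.I * (r * Complex.sin b)‖ = |r| := by
  have : (r:ℂ) * Complex.cos b - Complex.I * (r * Complex.sin b)
      = (r:ℂ) * (Complex.cos (-(b:ℂ)) + Complex.I * Complex.sin (-(b:ℂ))) := by
    rw [Complex.cos_neg, Complex.sin_neg]; ring
  rw [this, norm_mul, Complex.norm_real, Real.norm_eq_abs, ← Complex.ofReal_neg]
  rw [absUnit (-b), mul_one]

/-- the asymptotic monodromy multiplication operator with Fourier symbol
`Q(ω) = c e^{(G/2)(1-ω²/Ω²)} R(βω²/2)` has no eigenvalues: any `w ∈ L²(ℝ, ℂ²)` satisfying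
`Q(ω) w(ω) = z w(ω)` for a.e. `ω` vanishes almost everywhere. -/
theorem asymptotic_monodromy_no_eigenvalues
    (c G Ω β : ℝ) (hc : c ≠ 0) (hG : 0 < G) (hΩ : 0 < Ω)
    (Q : ℝ → Matrix (Fin 2) (Fin 2) ℂ)
    (hQ : ∀ ω : ℝ, Q ω = ((c * Real.exp (G / 2 * (1 - ω ^ 2 / Ω ^ 2)) : ℝ) : ℂ) •
      !![((Real.cos (β * ω ^ 2 / 2) : ℝ) : ℂ), -((Real.sin (β * ω ^ 2 / 2) : ℝ) : ℂ);
         ((Real.sin (β * ω ^ 2 / 2) : ℝ) : ℂ), ((Real.cos (β * ω ^ 2 / 2) : ℝ) : ℂ)]) :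
    ∀ z : ℂ, ∀ w : ℝ → EuclideanSpace ℂ (Fin 2), MemLp w 2 (volume : Measure ℝ) →
      (∀ᵐ ω ∂(volume : Measure ℝ), matCLM (Q ω) (w ω) = z • w ω) →
      w =ᵐ[(volume : Measure ℝ)] 0 := by
  intro z w _hw hae
  -- The "bad" set of frequencies where `z` could be an eigenvalue.
  set S : Set ℝ :=
    {ω : ℝ | |c| * Real.exp (G / 2 * (1 - ω ^ 2 / Ω ^ 2)) = ‖z‖} with hSdef
  set t : ℝ := Ω ^ 2 * (1 - 2 / G * Real.log (‖z‖ / |c|)) with htdef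
  have hcpos : (0:ℝ) < |c| := abs_pos.mpr hc
  have hSsub : S ⊆ {Real.sqrt t, -Real.sqrt t} := by
    intro ω hω
    have hω' : |c| * Real.exp (G / 2 * (1 - ω ^ 2 / Ω ^ 2)) = ‖z‖ := hω
    have hexp : Real.exp (G / 2 * (1 - ω ^ 2 / Ω ^ 2)) = ‖z‖ / |c| := by
      field_simp at hω' ⊢
      linarith [hω']
    have hlog : G / 2 * (1 - ω ^ 2 / Ω ^ 2) = Real.log (‖z‖ / |c|) := by
      rw [← hexp, Real.log_exp]
    have hsq : ω ^ 2 = t := by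
      rw [htdef, ← hlog]
      field_simp
      ring
    have habs : Real.sqrt t = |ω| := by
      rw [← hsq, Real.sqrt_sq_eq_abs]
    have : ω = Real.sqrt t ∨ ω = -Real.sqrt t := by
      rcases abs_cases ω with ⟨h1, _⟩ | ⟨h1, _⟩
      · left; rw [habs, h1]
      · right; rw [habs, h1]; ring
    rcases this with h | h <;> simp [h]
  have hSnull : ∀ᵐ ω ∂(volume : Measure ℝ), ω ∉ S := by
    have hfin : ({Real.sqrt t, -Real.sqrt t} : Set ℝ).Finite :=
      (Set.finite_singleton _).insert _
    have : (volume : Measure ℝ) S = 0 :=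
      measure_mono_null hSsub (hfin.measure_zero _)
    exact measure_eq_zero_iff_ae_notMem.mp this
  filter_upwards [hae, hSnull] with ω heig hωS
  -- notation
  set r : ℝ := c * Real.exp (G / 2 * (1 - ω ^ 2 / Ω ^ 2)) with hrdef
  set b : ℝ := β * ω ^ 2 / 2 with hbdef
  have hrabs : |r| = |c| * Real.exp (G / 2 * (1 - ω ^ 2 / Ω ^ 2)) := by
    rw [hrdef, abs_mul, abs_of_pos (Real.exp_pos _)]
  -- the determinant of `Q ω - z • 1` is nonzero
  have hdet : ((Q ω) - z • 1).det ≠ 0 := by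
    intro hd
    rw [hQ ω, detFactor] at hd
    rcases mul_eq_zero.mp hd with h | h
    · have hz : z = (r:ℂ) * Complex.cos b + Complex.I * (r * Complex.sin b) := by
        linear_combination -h
      apply hωS
      rw [hSdef]
      show |c| * Real.exp (G / 2 * (1 - ω ^ 2 / Ω ^ 2)) = ‖z‖
      rw [hz, absPlus, hrabs]
    · have hz : z = (r:ℂ) * Complex.cos b - Complex.I * (r * Complex.sin b) := by
        linear_combination -h
      apply hωS
      rw [hSdef]
      show |c| * Real.exp (G / 2 * (1 - ω ^ 2 / Ω ^ 2)) = ‖z‖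
      rw [hz, absMinus, hrabs]
  -- hence the matrix is invertible and the eigen-equation forces `w ω = 0`
  have hunit : IsUnit ((Q ω) - z • 1) :=
    (Matrix.isUnit_iff_isUnit_det _).mpr (isUnit_iff_ne_zero.mpr hdet)
  set v : Fin 2 → ℂ := WithLp.equiv 2 (Fin 2 → ℂ) (w ω) with hvdef
  have hmv : (Q ω).mulVec v = z • v := by
    have := congrArg (WithLp.equiv 2 (Fin 2 → ℂ)) heig
    rw [show matCLM (Q ω) = Matrix.toEuclideanCLM (𝕜 := ℂ) (Q ω) from rfl] at this
    rw [WithLp.equiv_apply, WithLp.equiv_apply, Matrix.ofLp_toEuclideanCLM] at this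
    simpa [hvdef] using this
  have h0 : ((Q ω) - z • 1).mulVec v = 0 := by
    rw [Matrix.sub_mulVec, Matrix.smul_mulVec, Matrix.one_mulVec, hmv, sub_self]
  have hv0 : v = 0 := by
    have hinj := Matrix.mulVec_injective_iff_isUnit.mpr hunit
    have : ((Q ω) - z • 1).mulVec v = ((Q ω) - z • 1).mulVec 0 := by
      rw [h0, Matrix.mulVec_zero]
    exact hinj this
  show w ω = 0
  have : WithLp.equiv 2 (Fin 2 → ℂ) (w ω) = WithLp.equiv 2 (Fin 2 → ℂ) 0 := by
    simpa [hvdef] using hv0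
  exact (WithLp.equiv 2 (Fin 2 → ℂ)).injective this
end
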